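/- For a random variable X with continuous strictly increasing distribution function F and finite mean, and for α ∈ (0,1), the expected shortfall satisfies (1-α)^{-1} ∫_α^1 F^{-1}(t) dt = (1-α)^{-1} min_{ξ∈ℝ} E[ρ_α(X-ξ)] + E[X], where ρ_α(x) = x(α - 1{x<0}). -/

import Mathlib

open MeasureTheory Set

/-- Expected shortfall equals the Koenker–Bassett minimization formula. -/
theorem stmt_0 {Ω : Type*} [MeasurableSpace Ω] (μ : Measure Ω) [IsProbabilityMeasure μ]
    (X : Ω → ℝ) (hX : Measurable X) (hXint : Integrable X μ)
    (α : ℝ) (hα : α ∈ Set.Ioo (0:ℝ) 1)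
    (F Finv : ℝ → ℝ)
    (hF : ∀ x, F x = (μ {ω | X ω ≤ x}).toReal)
    (hFc : Continuous F) (hFm : StrictMono F)
    (hInv : ∀ t ∈ Set.Ioo (0:ℝ) 1, F (Finv t) = t) :
    (1 - α)⁻¹ * ∫ t in α..1, Finv t
      = (1 - α)⁻¹ * (⨅ ξ : ℝ, ∫ ω, (X ω - ξ) * (α - if X ω - ξ < 0 then 1 else 0) ∂μ)
        + ∫ ω, X ω ∂μ := by
  obtain ⟨hα0, hα1⟩ := hα
  set q : ℝ := Finv α with hqdef
  have hFq : F q = α := hInv α ⟨hα0, hα1⟩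
  have h1α : (0:ℝ) < 1 - α := by linarith
  -- Basic facts about F
  have hFnn : ∀ x, 0 ≤ F x := fun x => by rw [hF x]; exact ENNReal.toReal_nonneg
  have hFle1 : ∀ x, F x ≤ 1 := by
    intro x
    rw [hF x]
    have := measure_mono (μ := μ) (subset_univ {ω | X ω ≤ x})
    calc (μ {ω | X ω ≤ x}).toReal ≤ (μ univ).toReal :=
          ENNReal.toReal_mono (measure_ne_top μ univ) this
      _ = 1 := by simp
  have hFlt1 : ∀ x, F x < 1 := fun x => lt_of_lt_of_le (hFm (lt_add_one x)) (hFle1 _)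
  have hmeas_le : ∀ x : ℝ, MeasurableSet {ω | X ω ≤ x} := fun x =>
    measurableSet_le hX measurable_const
  have hmeas_gt : ∀ x : ℝ, MeasurableSet {ω | x < X ω} := fun x =>
    measurableSet_lt measurable_const hX
  have hμle : ∀ x, μ {ω | X ω ≤ x} = ENNReal.ofReal (F x) := by
    intro x; rw [hF x, ENNReal.ofReal_toReal (measure_ne_top μ _)]
  have hμgt : ∀ x, μ {ω | x < X ω} = 1 - ENNReal.ofReal (F x) := by
    intro x
    have hc : {ω | x < X ω} = {ω | X ω ≤ x}ᶜ := by ext ω; simp [not_le]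
    rw [hc, measure_compl (hmeas_le x) (measure_ne_top μ _), measure_univ, hμle]
  have hμgt_toReal : ∀ x, (μ {ω | x < X ω}).toReal = 1 - F x := by
    intro x
    rw [hμgt x, ENNReal.toReal_sub_of_le (ENNReal.ofReal_le_one.mpr (hFle1 x)) ENNReal.one_ne_top,
      ENNReal.toReal_one, ENNReal.toReal_ofReal (hFnn x)]
  -- integrability of positive parts
  have hmax_int : ∀ ξ : ℝ, Integrable (fun ω => max (X ω - ξ) 0) μ := fun ξ =>
    (hXint.sub (integrable_const ξ)).pos_part
  set EX : ℝ := ∫ ω, X ω ∂μ with hEX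
  set h : ℝ → ℝ := fun ξ => ∫ ω, max (X ω - ξ) 0 ∂μ with hh
  -- rewrite the check-function integral
  have hg : ∀ ξ : ℝ, (∫ ω, (X ω - ξ) * (α - if X ω - ξ < 0 then 1 else 0) ∂μ)
      = h ξ - (1 - α) * (EX - ξ) := by
    intro ξ
    have hpt : ∀ ω, (X ω - ξ) * (α - if X ω - ξ < 0 then 1 else 0)
        = max (X ω - ξ) 0 - (1 - α) * (X ω - ξ) := by
      intro ω
      rcases lt_or_ge (X ω - ξ) 0 with hω | hω
      · rw [if_pos hω, max_eq_right hω.le]; ring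
      · rw [if_neg (not_lt.mpr hω), max_eq_left hω]; ring
    have i1 : Integrable (fun ω => X ω - ξ) μ := hXint.sub (integrable_const ξ)
    simp_rw [hpt]
    rw [integral_sub (hmax_int ξ) (i1.const_mul (1 - α)),
      integral_const_mul, integral_sub hXint (integrable_const ξ), integral_const]
    simp [hh, hEX]
  have hPq : (μ {ω | q < X ω}).toReal = 1 - α := by rw [hμgt_toReal q, hFq]
  -- minimality at q
  have hmin : ∀ ξ : ℝ, h q - (1 - α) * (EX - q) ≤ h ξ - (1 - α) * (EX - ξ) := by
    intro ξ
    have ind_int : Integrable ({ω | q < X ω}.indicator fun _ => q - ξ) μ :=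
      (integrable_const (q - ξ)).indicator (hmeas_gt q)
    have key : ∫ ω, (max (X ω - q) 0 + ({ω | q < X ω}.indicator (fun _ => q - ξ)) ω) ∂μ
        ≤ ∫ ω, max (X ω - ξ) 0 ∂μ := by
      apply integral_mono ((hmax_int q).add ind_int) (hmax_int ξ)
      intro ω
      simp only [Pi.add_apply]
      by_cases hω : q < X ω
      · have h1 : max (X ω - q) 0 = X ω - q := max_eq_left (by linarith)
        have h2 : X ω - ξ ≤ max (X ω - ξ) 0 := le_max_left _ _
        rw [indicator_of_mem (show ω ∈ {ω | q < X ω} from hω), h1]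
        linarith
      · have hω' : X ω ≤ q := not_lt.mp hω
        have h1 : max (X ω - q) 0 = 0 := max_eq_right (by linarith)
        have h2 : (0:ℝ) ≤ max (X ω - ξ) 0 := le_max_right _ _
        rw [indicator_of_notMem (show ω ∉ {ω | q < X ω} from hω), h1]
        linarith
    rw [integral_add (hmax_int q) ind_int, integral_indicator_const _ (hmeas_gt q), measureReal_def, hPq,
      smul_eq_mul] at key
    have : h q + (1 - α) * (q - ξ) ≤ h ξ := key
    nlinarith
  -- infimum value
  have hbdd : BddBelow (Set.range fun ξ : ℝ =>
      ∫ ω, (X ω - ξ) * (α - if X ω - ξ < 0 then 1 else 0) ∂μ) := by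
    refine ⟨h q - (1 - α) * (EX - q), ?_⟩
    rintro _ ⟨ξ, rfl⟩
    exact le_trans (hmin ξ) (le_of_eq (hg ξ).symm)
  have hInf : (⨅ ξ : ℝ, ∫ ω, (X ω - ξ) * (α - if X ω - ξ < 0 then 1 else 0) ∂μ)
      = h q - (1 - α) * (EX - q) := by
    apply le_antisymm
    · exact (ciInf_le hbdd q).trans_eq (hg q)
    · exact le_ciInf fun ξ => le_trans (hmin ξ) (le_of_eq (hg ξ).symm)
  -- layer cake: ∫ t in Ioo α 1, (Finv t - q) = h q
  have hFinv_mem : ∀ t ∈ Ioo α 1, t ∈ Ioo (0:ℝ) 1 := fun t ht => ⟨lt_trans hα0 ht.1, ht.2⟩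
  have hFinv_mono : MonotoneOn Finv (Ioo α 1) := by
    intro a ha b hb hab
    have hfa := hInv a (hFinv_mem a ha)
    have hfb := hInv b (hFinv_mem b hb)
    by_contra hcon
    push_neg at hcon
    have hlt := hFm hcon
    rw [hfa, hfb] at hlt
    linarith
  have hAEm : AEMeasurable Finv (volume.restrict (Ioo α 1)) :=
    aemeasurable_restrict_of_monotoneOn measurableSet_Ioo hFinv_mono
  have hnn : 0 ≤ᵐ[volume.restrict (Ioo α 1)] fun t => Finv t - q := by
    filter_upwards [ae_restrict_mem measurableSet_Ioo] with t ht
    have h1 : F (Finv t) = t := hInv t (hFinv_mem t ht)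
    have h2 : F q < F (Finv t) := by rw [hFq, h1]; exact ht.1
    have h3 := hFm.lt_iff_lt.mp h2
    simp only [Pi.zero_apply]
    linarith
  -- both lintegrals equal ∫⁻ s in Ioi 0, ofReal (1 - F (q + s))
  have hmble : AEMeasurable (fun ω => max (X ω - q) 0) μ :=
    ((hX.sub measurable_const).max measurable_const).aemeasurable
  have hnn0 : 0 ≤ᵐ[μ] fun ω => max (X ω - q) 0 :=
    ae_of_all _ fun ω => le_max_right (X ω - q) 0
  have hL1 : ∫⁻ ω, ENNReal.ofReal (max (X ω - q) 0) ∂μ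
      = ∫⁻ s in Ioi (0:ℝ), ENNReal.ofReal (1 - F (q + s)) := by
    rw [lintegral_eq_lintegral_meas_lt μ hnn0 hmble]
    refine setLIntegral_congr_fun measurableSet_Ioi (fun s hs => ?_)
    have hset : {ω | s < max (X ω - q) 0} = {ω | q + s < X ω} := by
      ext ω
      simp only [mem_setOf_eq, lt_max_iff]
      constructor
      · rintro (h1 | h1)
        · linarith
        · exact absurd h1 (not_lt.mpr (le_of_lt (mem_Ioi.mp hs)))
      · intro h1; left; linarith
    rw [hset, hμgt (q + s), ENNReal.ofReal_sub _ (hFnn _), ENNReal.ofReal_one]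
  have hL2 : ∫⁻ t in Ioo α 1, ENNReal.ofReal (Finv t - q)
      = ∫⁻ s in Ioi (0:ℝ), ENNReal.ofReal (1 - F (q + s)) := by
    rw [lintegral_eq_lintegral_meas_lt _ hnn (hAEm.sub aemeasurable_const)]
    refine setLIntegral_congr_fun measurableSet_Ioi (fun s hs => ?_)
    have hb1 : α < F (q + s) := by
      rw [← hFq]; exact hFm (by linarith [mem_Ioi.mp hs])
    have hset : {t | s < Finv t - q} ∩ Ioo α 1 = Ioo (F (q + s)) 1 := by
      ext t
      simp only [mem_inter_iff, mem_setOf_eq, mem_Ioo]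
      constructor
      · rintro ⟨h1, h2, h3⟩
        have hFt : F (Finv t) = t := hInv t (hFinv_mem t ⟨h2, h3⟩)
        refine ⟨?_, h3⟩
        have : F (q + s) < F (Finv t) := hFm (by linarith)
        rwa [hFt] at this
      · rintro ⟨h1, h2⟩
        have ht : t ∈ Ioo α 1 := ⟨lt_trans hb1 h1, h2⟩
        have hFt : F (Finv t) = t := hInv t (hFinv_mem t ht)
        refine ⟨?_, ht⟩
        have : F (q + s) < F (Finv t) := by rw [hFt]; exact h1
        have := hFm.lt_iff_lt.mp this
        linarith
    rw [Measure.restrict_apply' measurableSet_Ioo, hset, Real.volume_Ioo]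
  have hfin : ∫⁻ t in Ioo α 1, ENNReal.ofReal (Finv t - q) < ⊤ := by
    rw [hL2, ← hL1]; exact (hmax_int q).lintegral_lt_top
  -- convert to Bochner integrals
  have hASM : AEStronglyMeasurable (fun t => Finv t - q) (volume.restrict (Ioo α 1)) :=
    (hAEm.sub aemeasurable_const).aestronglyMeasurable
  have hint_sub : Integrable (fun t => Finv t - q) (volume.restrict (Ioo α 1)) :=
    ⟨hASM, (hasFiniteIntegral_iff_ofReal hnn).mpr hfin⟩
  have hB : ∫ t in Ioo α 1, (Finv t - q) = h q := by
    show _ = ∫ ω, max (X ω - q) 0 ∂μ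
    rw [integral_eq_lintegral_of_nonneg_ae hnn hASM,
      integral_eq_lintegral_of_nonneg_ae hnn0 hmble.aestronglyMeasurable, hL1, hL2]
  -- ∫ t in α..1, Finv t = h q + (1 - α) * q
  have hIoo : ∫ t in Ioo α 1, Finv t = h q + (1 - α) * q := by
    have hsplit : ∫ t in Ioo α 1, Finv t = ∫ t in Ioo α 1, ((Finv t - q) + q) := by
      apply integral_congr_ae
      filter_upwards with t
      ring
    rw [hsplit, integral_add hint_sub ((integrableOn_const_iff).mpr (Or.inr (by
      rw [Real.volume_Ioo]; exact ENNReal.ofReal_lt_top))), hB, integral_const, measureReal_def,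
      Measure.restrict_apply_univ, Real.volume_Ioo, smul_eq_mul,
      ENNReal.toReal_ofReal (by linarith)]
  have hIval : ∫ t in α..1, Finv t = h q + (1 - α) * q := by
    rw [intervalIntegral.integral_of_le hα1.le, integral_Ioc_eq_integral_Ioo, hIoo]
  rw [hIval, hInf]
  field_simp
  ring
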